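/- For the simple type U = X→(X→X)→X over the single base variable X, the finite live strategies on the P-backtracking game 𝒫G(Δ_U) are exactly the strategies τ_n for n ∈ ℕ, where τ_n is the set of all prefixes of the dialogue ⟨0,1⟩⟨1,2⟩⟨2,1⟩⟨1,2⟩⟨4,1⟩⟨1,2⟩⟨6,1⟩…⟨1,2⟩⟨2n,1⟩⟨1,1⟩ of length 2n+2 containing n occurrences of the label 2. In particular, the finite live strategies on 𝒫G(Δ_U) are in bijection with ℕ. -/

import Mathlib

namespace Hypergames

/-! Generic transition systems, games, dialogues and strategies. -/

/-- The state reached from `q` by following the labels `ls` (if defined). -/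
def reach {Q L : Type} (tr : Q → L → Option Q) : Q → List L → Option Q
  | q, [] => some q
  | q, l :: ls => (tr q l).bind fun q' => reach tr q' ls

/-- The game (set of traces) of a transition system with transition
function `tr` and initial state `star`. -/
def gameOf {Q L : Type} (tr : Q → L → Option Q) (star : Q) : Set (List L) :=
  { ls | (reach tr star ls).isSome }

/-- A set of `M`-traces is a game if it contains the empty trace and the
predecessor of each of its nonempty members. -/
def IsGame {M : Type} (G : Set (List M)) : Prop :=
  [] ∈ G ∧ ∀ p ∈ G, p ≠ [] → p.dropLast ∈ G

/-- The pointer of the `j`-th element (1-indexed) of a dialogue. -/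
def pointer {M : Type} (d : List (ℕ × M)) (j : ℕ) : Option ℕ :=
  (d[j-1]?).map Prod.fst

/-- A dialogue over `M`: an `(ℕ × M)`-trace `⟨α₁,m₁⟩…⟨α_k,m_k⟩` such that
`i - αᵢ ∈ {1,3,5,…}` for each `i`. -/
def IsDialogue {M : Type} (d : List (ℕ × M)) : Prop :=
  ∀ j, 1 ≤ j → j ≤ d.length → ∀ α, pointer d j = some α → α < j ∧ Odd (j - α)

/-- A chain of (1-indexed) positions `d₁ < d₂ < ⋯ < dₙ` of the dialogue `d`
with `α_{d₁} = 0` and `α_{d_j} = d_{j-1}`; such a chain determines a thread. -/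
def IsChain {M : Type} (d : List (ℕ × M)) (ds : List ℕ) : Prop :=
  (∀ j ∈ ds, 1 ≤ j ∧ j ≤ d.length) ∧
  (∀ j, ds.head? = some j → pointer d j = some 0) ∧
  List.Chain' (fun a b => pointer d b = some a) ds ∧
  List.Chain' (· < ·) ds

/-- The thread (sequence of moves) along a chain of positions. -/
def threadOf {M : Type} (d : List (ℕ × M)) (ds : List ℕ) : List M :=
  ds.filterMap fun j => (d[j-1]?).map Prod.snd

/-- A dialogue respects `G` if all its threads are in `G`. -/
def Respects {M : Type} (G : Set (List M)) (d : List (ℕ × M)) : Prop :=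
  ∀ ds, IsChain d ds → threadOf d ds ∈ G

/-- The backtracking game `ℬG`: all dialogues over `M` respecting `G`. -/
def BG {M : Type} (G : Set (List M)) : Set (List (ℕ × M)) :=
  { d | IsDialogue d ∧ Respects G d }

/-- The `P`-backtracking game `𝒫G`: dialogues of `ℬG` in which every
odd-indexed move points to the immediately preceding move. -/
def PG {M : Type} (G : Set (List M)) : Set (List (ℕ × M)) :=
  { d | d ∈ BG G ∧ ∀ j, Odd j → j ≤ d.length → pointer d j = some (j - 1) }

/-- A strategy (for the second player `P`) on a game `G`. -/
def IsStrategy {M : Type} (G σ : Set (List M)) : Prop :=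
  σ ⊆ G ∧ IsGame σ ∧ ∀ p ∈ σ, Odd p.length → ∃! m, p ++ [m] ∈ σ

/-- A strategy is live if it responds to every stimulus. -/
def Live {M : Type} (G σ : Set (List M)) : Prop :=
  ∀ p ∈ σ, Even p.length → ∀ m, p ++ [m] ∈ G → p ++ [m] ∈ σ

/-- The thread ending at position `j` (1-indexed), computed by following
pointers backwards, with explicit fuel (use fuel `j`). -/
def threadTo {M : Type} (d : List (ℕ × M)) : ℕ → ℕ → List M
  | 0, _ => []
  | fuel + 1, j =>
    match d[j-1]? with
    | none => []
    | some (α, m) => if α = 0 then [m] else threadTo d fuel α ++ [m]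

/-! Simple types over a set `V` of type variables, and their games. -/

/-- Simple types generated from type variables by implication `→`. -/
inductive Ty (V : Type) : Type
  | var : V → Ty V
  | arrow : Ty V → Ty V → Ty V

/-- The branches `T₁,…,Tₙ` of a type `T₁→…→Tₙ→X`. -/
def Ty.branches {V : Type} : Ty V → List (Ty V)
  | .var _ => []
  | .arrow A B => A :: Ty.branches B

/-- The rightmost (head) variable `X` of a type `T₁→…→Tₙ→X`. -/
def Ty.headVar {V : Type} : Ty V → V
  | .var X => X
  | .arrow _ B => Ty.headVar B

/-- The transition function of the transition system `Δ_T`: states are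
simple types together with an initial state `⋆` (here `none`), labels are
positive integers (branch choices), with transitions `⋆ →¹ T` and
`(T₁→…→Tₙ→X) →ⁱ Tᵢ` for `1 ≤ i ≤ n`. -/
def tyTrans {V : Type} (T : Ty V) : Option (Ty V) → ℕ → Option (Option (Ty V))
  | none, i => if i = 1 then some (some T) else none
  | some S, i => if 1 ≤ i then (S.branches[i-1]?).map some else none

/-- The colour of the move at (1-indexed) position `j` of a dialogue on the
game of `Δ_T`: the rightmost variable of the target state of the associated
transition, i.e. of the state reached along the thread ending at `j`. -/
def colourAt {V : Type} (T : Ty V) (d : List (ℕ × ℕ)) (j : ℕ) : Option V :=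
  match reach (tyTrans T) none (threadTo d j j) with
  | some (some S) => some S.headVar
  | _ => none

/-- The copycat condition for a dialogue in `𝒫G(Δ_T)`: the colour of every
even-indexed (`P`) move equals the colour of the immediately preceding move. -/
def CopycatDialogue {V : Type} (T : Ty V) (d : List (ℕ × ℕ)) : Prop :=
  ∀ j, Even j → 2 ≤ j → j ≤ d.length → colourAt T d j = colourAt T d (j - 1)

/-- A strategy satisfies the copycat condition if all its traces do. -/
def CopycatStrategy {V : Type} (T : Ty V) (σ : Set (List (ℕ × ℕ))) : Prop :=
  ∀ d ∈ σ, CopycatDialogue T d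

/-- η-expanded β-normal terms of type `T` in context `Γ` (variables in de
Bruijn style: an index into the context): such a term is
`λx₁^{T₁}…λxₙ^{Tₙ}. y N₁ … N_m` where `T = T₁→…→Tₙ→X`, `y` is a variable of
type `U₁→…→U_m→X` among the context extended by `x₁,…,xₙ`, and each `N_j` is
η-expanded β-normal of type `U_j` in the extended context. -/
inductive NF (V : Type) : List (Ty V) → Ty V → Type
  | mk (Γ : List (Ty V)) (T : Ty V)
      (k : Fin (Γ ++ T.branches).length)
      (hhead : ((Γ ++ T.branches).get k).headVar = T.headVar)
      (args : (j : Fin ((Γ ++ T.branches).get k).branches.length) →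
        NF V (Γ ++ T.branches) (((Γ ++ T.branches).get k).branches.get j)) :
      NF V Γ T

/-- The simple type `U = X→(X→X)→X` over the single base variable `X`. -/
def U11 : Ty Unit :=
  .arrow (.var ()) (.arrow (.arrow (.var ()) (.var ())) (.var ()))

/-- The dialogue `⟨0,1⟩⟨1,2⟩⟨2,1⟩⟨1,2⟩⟨4,1⟩…⟨1,2⟩⟨2n,1⟩⟨1,1⟩` of length
`2n+2` with `n` occurrences of the label `2`. -/
def D11 (n : ℕ) : List (ℕ × ℕ) :=
  (0, 1) :: ((List.range n).flatMap fun j => [(1, 2), (2 * (j + 1), 1)]) ++ [(1, 1)]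

/-- The strategy `τ_n`: all prefixes of the dialogue `D11 n`. -/
def tau11 (n : ℕ) : Set (List (ℕ × ℕ)) := { p | p <+: D11 n }

/-! ### Auxiliary machinery for the proof -/

abbrev G11 : Set (List ℕ) := gameOf (tyTrans U11) none

lemma G_nil : [] ∈ G11 := by simp [G11, gameOf, reach]
lemma G_1 : [1] ∈ G11 := by simp [G11, gameOf, reach, tyTrans]
lemma G_11 : [1,1] ∈ G11 := by simp [G11, gameOf, reach, tyTrans, U11, Ty.branches]
lemma G_12 : [1,2] ∈ G11 := by simp [G11, gameOf, reach, tyTrans, U11, Ty.branches]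
lemma G_121 : [1,2,1] ∈ G11 := by simp [G11, gameOf, reach, tyTrans, U11, Ty.branches]

lemma G_single {m : ℕ} (h : [m] ∈ G11) : m = 1 := by
  by_contra hm
  simp [G11, gameOf, reach, tyTrans, hm] at h

lemma G_two {m : ℕ} (h : [1, m] ∈ G11) : m = 1 ∨ m = 2 := by
  match m with
  | 0 => simp [G11, gameOf, reach, tyTrans, U11, Ty.branches] at h
  | 1 => exact Or.inl rfl
  | 2 => exact Or.inr rfl
  | (k+3) => simp [G11, gameOf, reach, tyTrans, U11, Ty.branches] at h

lemma G_11m {m : ℕ} {r : List ℕ} (h : (1 :: 1 :: m :: r) ∈ G11) : False := by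
  simp [G11, gameOf, reach, tyTrans, U11, Ty.branches] at h

lemma G_12m {m : ℕ} (h : [1, 2, m] ∈ G11) : m = 1 := by
  match m with
  | 0 => simp [G11, gameOf, reach, tyTrans, U11, Ty.branches] at h
  | 1 => rfl
  | (k+2) => simp [G11, gameOf, reach, tyTrans, U11, Ty.branches] at h

lemma G_121m {m : ℕ} {r : List ℕ} (h : (1 :: 2 :: 1 :: m :: r) ∈ G11) : False := by
  simp [G11, gameOf, reach, tyTrans, U11, Ty.branches] at h

/-- The intended entry of `D11 n` at 0-based index `i`. -/
def ent (n i : ℕ) : ℕ × ℕ :=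
  if i = 0 then (0, 1)
  else if i % 2 = 1 then (if i = 2 * n + 1 then (1, 1) else (1, 2))
  else (i, 1)

def Fn (n : ℕ) : List (ℕ × ℕ) := (List.range n).flatMap fun j => [(1, 2), (2 * (j + 1), 1)]

lemma Fn_len (n : ℕ) : (Fn n).length = 2 * n := by
  induction n with
  | zero => simp [Fn]
  | succ k ih =>
    have : Fn (k + 1) = Fn k ++ [(1, 2), (2 * (k + 1), 1)] := by
      simp [Fn, List.range_succ]
    rw [this]; simp [ih]; omega

lemma Fn_get (n i : ℕ) :
    (Fn n)[i]? = if i < 2 * n then some (if i % 2 = 0 then (1, 2) else (i + 1, 1)) else none := by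
  induction n with
  | zero => simp [Fn]
  | succ n ih =>
    have h : Fn (n + 1) = Fn n ++ [(1, 2), (2 * (n + 1), 1)] := by
      simp [Fn, List.range_succ]
    rw [h]
    rcases lt_trichotomy i (2 * n) with hi | hi | hi
    · rw [List.getElem?_append_left (by rw [Fn_len]; omega), ih]
      simp only [hi, if_pos, (show i < 2 * (n+1) by omega)]
    · subst hi
      rw [List.getElem?_append_right (by rw [Fn_len])]
      simp [Fn_len, (show 2*n < 2*(n+1) by omega), Nat.mul_mod_right]
    · rw [List.getElem?_append_right (by rw [Fn_len]; omega), Fn_len]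
      rcases Nat.lt_or_ge i (2 * (n + 1)) with h2 | h2
      · have e1 : i - 2 * n = 1 := by omega
        have e2 : i % 2 = 1 := by omega
        rw [e1]
        simp [h2, e2]
        omega
      · have e1 : 2 ≤ i - 2 * n := by omega
        have h3 : ¬ (i < 2 * (n+1)) := by omega
        simp [h3]
        omega

lemma getD11 (n i : ℕ) : (D11 n)[i]? = if i < 2 * n + 2 then some (ent n i) else none := by
  have hD : D11 n = (0,1) :: (Fn n ++ [(1,1)]) := by simp [D11, Fn]
  rw [hD]
  match i with
  | 0 => simp [ent]
  | i + 1 =>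
    simp only [List.getElem?_cons_succ]
    rcases lt_trichotomy i (2 * n) with hi | hi | hi
    · rw [List.getElem?_append_left (by rw [Fn_len]; omega), Fn_get]
      simp only [hi, if_pos, (show i + 1 < 2*n+2 by omega)]
      unfold ent
      rcases Nat.mod_two_eq_zero_or_one i with h1 | h1
      · have h2 : (i+1) % 2 = 1 := by omega
        have h3 : i + 1 ≠ 2 * n + 1 := by omega
        have h4 : i ≠ 2 * n := by omega
        simp [h1, h2, h3, h4]
      · have h2 : ¬ ((i+1) % 2 = 1) := by omega
        simp [h1, h2]
    · subst hi
      rw [List.getElem?_append_right (by rw [Fn_len])]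
      have h2 : (2*n+1) % 2 = 1 := by omega
      simp [Fn_len, ent, (show 2*n+1 < 2*n+2 by omega), h2]
    · rw [List.getElem?_append_right (by rw [Fn_len]; omega), Fn_len]
      have h3 : ¬ (i + 1 < 2*n+2) := by omega
      simp [h3]
      omega

lemma D11_len (n : ℕ) : (D11 n).length = 2 * n + 2 := by
  have hD : D11 n = (0,1) :: (Fn n ++ [(1,1)]) := by simp [D11, Fn]
  rw [hD]; simp [Fn_len]

lemma ent_fst (n i : ℕ) :
    (ent n i).1 = if i = 0 then 0 else if i % 2 = 1 then 1 else i := by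
  unfold ent
  split_ifs <;> first | rfl | omega

lemma ent_snd (n i : ℕ) :
    (ent n i).2 = if i % 2 = 1 ∧ i ≠ 2*n+1 then 2 else 1 := by
  unfold ent
  split_ifs <;> first | rfl | omega

lemma ent_zero (n : ℕ) : ent n 0 = (0, 1) := rfl

lemma ent_odd {n i : ℕ} (h1 : i % 2 = 1) (h2 : i ≠ 2*n+1) : ent n i = (1, 2) := by
  unfold ent
  rw [if_neg (by omega), if_pos h1, if_neg h2]

lemma ent_last (n : ℕ) : ent n (2*n+1) = (1, 1) := by
  unfold ent
  rw [if_neg (by omega), if_pos (by omega), if_pos rfl]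

lemma ent_even' {n i : ℕ} (h0 : i ≠ 0) (h1 : i % 2 = 0) : ent n i = (i, 1) := by
  unfold ent
  rw [if_neg h0, if_neg (by omega)]

lemma ent_congr {n n' i : ℕ} (hn : i ≠ 2*n+1) (hn' : i ≠ 2*n'+1) : ent n i = ent n' i := by
  unfold ent
  simp [hn, hn']

lemma ent_even {n n' i : ℕ} (h : i % 2 = 0) : ent n i = ent n' i :=
  ent_congr (by omega) (by omega)

lemma len_le_of_prefix {p : List (ℕ × ℕ)} {n : ℕ} (h : p <+: D11 n) : p.length ≤ 2*n+2 := by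
  have := h.length_le; rwa [D11_len] at this

lemma entry_of_prefix {p : List (ℕ × ℕ)} {n i : ℕ} (h : p <+: D11 n) (hi : i < p.length) :
    p[i]? = some (ent n i) := by
  have hlen := len_le_of_prefix h
  obtain ⟨t, ht⟩ := h
  have h2 : (p ++ t)[i]? = p[i]? := List.getElem?_append_left hi
  rw [ht] at h2
  rw [← h2, getD11, if_pos (by omega)]

lemma pointer_of_prefix {p : List (ℕ × ℕ)} {n j : ℕ} (h : p <+: D11 n)
    (h1 : 1 ≤ j) (h2 : j ≤ p.length) :
    pointer p j = some (ent n (j-1)).1 := by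
  unfold pointer
  rw [entry_of_prefix h (by omega), Option.map_some]

lemma take_agree {k n n' : ℕ} (hk : k ≤ 2*n+1) (hk' : k ≤ 2*n'+1) :
    (D11 n).take k = (D11 n').take k := by
  apply List.ext_getElem?
  intro i
  rw [List.getElem?_take, List.getElem?_take]
  split
  · next hik =>
    rw [getD11, getD11, if_pos (by omega), if_pos (by omega),
      ent_congr (n' := n') (by omega) (by omega)]
  · rfl

lemma prefix_congr {q : List (ℕ × ℕ)} {n n' : ℕ} (h : q <+: D11 n)
    (h1 : q.length ≤ 2*n+1) (h2 : q.length ≤ 2*n'+1) : q <+: D11 n' := by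
  rw [List.prefix_iff_eq_take] at h ⊢
  rw [← take_agree h1 h2]
  exact h

lemma prefix_snoc {q : List (ℕ × ℕ)} {n : ℕ} (hq : q <+: D11 n) (hL : q.length < 2*n+2) :
    q ++ [ent n q.length] <+: D11 n := by
  rw [List.prefix_iff_eq_take] at hq ⊢
  have hlen : (q ++ [ent n q.length]).length = q.length + 1 := by simp
  rw [hlen, List.take_succ, getD11, if_pos hL, ← hq]
  rfl

/-- The unique odd-length position-(2k+1) element of `𝒫G`. -/
def A (k : ℕ) : List (ℕ × ℕ) := (D11 k).take (2*k+1)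

lemma A_len (k : ℕ) : (A k).length = 2*k+1 := by
  simp [A, D11_len]

lemma A_prefix (k : ℕ) : A k <+: D11 k := List.take_prefix _ _

lemma D11_eq_A (k : ℕ) : D11 k = A k ++ [(1,1)] := by
  conv_lhs => rw [← List.take_length (l := D11 k), D11_len]
  rw [List.take_succ, getD11, if_pos (by omega)]
  rw [ent_last]
  rfl

lemma A_succ (k : ℕ) : A (k+1) = (A k ++ [(1,2)]) ++ [(2*k+2, 1)] := by
  have h1 : A (k+1) = (D11 (k+1)).take (2*k+2) ++ ((D11 (k+1))[2*k+2]?).toList := by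
    rw [A, (show 2*(k+1)+1 = (2*k+2)+1 by ring), List.take_succ]
  have h2 : (D11 (k+1)).take (2*k+2) = (D11 (k+1)).take (2*k+1) ++ ((D11 (k+1))[2*k+1]?).toList := by
    rw [List.take_succ]
  have h3 : (D11 (k+1)).take (2*k+1) = A k := by
    rw [A]; exact (take_agree (by omega) (by omega)).symm
  have e1 : (D11 (k+1))[2*k+1]? = some (1,2) := by
    rw [getD11, if_pos (by omega), ent_odd (by omega) (by omega)]
  have e2 : (D11 (k+1))[2*k+2]? = some (2*k+2, 1) := by
    rw [getD11, if_pos (by omega), ent_even' (by omega) (by omega)]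
  rw [h1, h2, h3, e1, e2]
  rfl

lemma A_zero : A 0 = [(0,1)] := by decide

/-! Soundness: prefixes of `D11 n` belong to `𝒫G`. -/

lemma respects_prefix {p : List (ℕ × ℕ)} {n : ℕ} (h : p <+: D11 n) : Respects G11 p := by
  intro ds hc
  obtain ⟨hbd, hhd, hptr, hlt⟩ := hc
  have hplen := len_le_of_prefix h
  match ds with
  | [] => simpa [threadOf] using G_nil
  | a :: rest =>
    have ha := hbd a (by simp)
    have ha0 : pointer p a = some 0 := hhd a rfl
    rw [pointer_of_prefix h ha.1 ha.2, ent_fst] at ha0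
    have ha1 : a = 1 := by
      have := Option.some.inj ha0
      split_ifs at this <;> omega
    subst ha1
    have e0 : p[0]? = some (ent n 0) := entry_of_prefix h (by omega)
    have s0 : (ent n 0).2 = 1 := rfl
    match rest with
    | [] =>
      have ht : threadOf p [1] = [(ent n 0).2] := by
        simp [threadOf, e0]
      rw [ht, s0]; exact G_1
    | b :: rest2 =>
      have hb := hbd b (by simp)
      have hb1 : pointer p b = some 1 := (List.isChain_cons_cons.mp hptr).1
      rw [pointer_of_prefix h hb.1 hb.2, ent_fst] at hb1
      have hbodd : (b-1) % 2 = 1 := by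
        have := Option.some.inj hb1
        split_ifs at this <;> omega
      have eb : p[b-1]? = some (ent n (b-1)) := entry_of_prefix h (by omega)
      match rest2 with
      | [] =>
        have ht : threadOf p [1, b] = [1, (ent n (b-1)).2] := by
          simp [threadOf, e0, eb, s0]
        rw [ht, ent_snd]
        split_ifs
        · exact G_12
        · exact G_11
      | c :: rest3 =>
        have hcb := hbd c (by simp)
        have hc1 : pointer p c = some b := (List.isChain_cons_cons.mp (List.isChain_cons_cons.mp hptr).2).1
        rw [pointer_of_prefix h hcb.1 hcb.2, ent_fst] at hc1
        have hb2 : 2 ≤ b := by omega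
        have hcmain : c - 1 = b ∧ ¬ ((c-1) % 2 = 1) := by
          have := Option.some.inj hc1
          split_ifs at this <;> omega
        have ec : p[c-1]? = some (ent n (c-1)) := entry_of_prefix h (by omega)
        have sc : (ent n (c-1)).2 = 1 := by
          rw [ent_snd, if_neg]; tauto
        have sb : (ent n (b-1)).2 = 2 := by
          rw [ent_snd, if_pos]
          constructor
          · exact hbodd
          · omega
        match rest3 with
        | [] =>
          have ht : threadOf p [1, b, c] = [1, 2, 1] := by
            simp [threadOf, e0, eb, ec, s0, sb, sc]
          rw [ht]; exact G_121
        | e :: rest4 =>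
          exfalso
          have heb := hbd e (by simp)
          have he1 : pointer p e = some c :=
            (List.isChain_cons_cons.mp (List.isChain_cons_cons.mp (List.isChain_cons_cons.mp hptr).2).2).1
          rw [pointer_of_prefix h heb.1 heb.2, ent_fst] at he1
          have := Option.some.inj he1
          split_ifs at this <;> omega

lemma mem_PG_of_prefix {p : List (ℕ × ℕ)} {n : ℕ} (h : p <+: D11 n) : p ∈ PG G11 := by
  refine ⟨⟨?_, respects_prefix h⟩, ?_⟩
  · intro j h1 h2 α hα
    rw [pointer_of_prefix h h1 h2, ent_fst] at hα
    have h3 := Option.some.inj hα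
    constructor
    · split_ifs at h3 <;> omega
    · rw [Nat.odd_iff]
      split_ifs at h3 <;> omega
  · intro j hj hjlen
    have hj1 : j % 2 = 1 := Nat.odd_iff.mp hj
    rw [pointer_of_prefix h (by omega) hjlen, ent_fst]
    congr 1
    split_ifs <;> omega

/-! `𝒫G` is closed under removing the last move. -/

lemma pointer_append {q : List (ℕ × ℕ)} {x : ℕ × ℕ} {j : ℕ} (h1 : 1 ≤ j) (h2 : j ≤ q.length) :
    pointer (q ++ [x]) j = pointer q j := by
  unfold pointer
  rw [List.getElem?_append_left (by omega)]

lemma chain'_congr {d d' : List (ℕ × ℕ)} {ds : List ℕ}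
    (h : ∀ j ∈ ds, pointer d j = pointer d' j) :
    List.Chain' (fun a b => pointer d b = some a) ds →
    List.Chain' (fun a b => pointer d' b = some a) ds := by
  induction ds with
  | nil => intro; simp [List.Chain']
  | cons a t ih =>
    intro hch
    match t with
    | [] => simp [List.Chain']
    | b :: t2 =>
      rw [List.Chain', List.isChain_cons_cons] at hch ⊢
      refine ⟨by rw [← h b (by simp)]; exact hch.1, ih (fun j hj => h j (by simp [hj])) hch.2⟩

lemma PG_drop {q : List (ℕ × ℕ)} {x : ℕ × ℕ} (h : q ++ [x] ∈ PG G11) : q ∈ PG G11 := by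
  obtain ⟨⟨hdia, hresp⟩, hodd⟩ := h
  refine ⟨⟨?_, ?_⟩, ?_⟩
  · intro j h1 h2 α hα
    exact hdia j h1 (by simp; omega) α (by rwa [pointer_append h1 h2])
  · intro ds hc
    obtain ⟨hbd, hhd, hptr, hlt⟩ := hc
    have hmem : ∀ j ∈ ds, pointer q j = pointer (q ++ [x]) j := fun j hj =>
      (pointer_append (hbd j hj).1 (hbd j hj).2).symm
    have hc' : IsChain (q ++ [x]) ds := by
      refine ⟨fun j hj => ⟨(hbd j hj).1, by have := (hbd j hj).2; simp; omega⟩, ?_, ?_, hlt⟩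
      · intro j hj
        rw [← hmem j (List.mem_of_mem_head? (by rw [hj]; rfl))]
        exact hhd j hj
      · exact chain'_congr hmem hptr
    have hthread := hresp ds hc'
    have : threadOf (q ++ [x]) ds = threadOf q ds := by
      unfold threadOf
      apply List.filterMap_congr
      intro j hj
      rw [List.getElem?_append_left (by have := (hbd j hj); omega)]
    rwa [this] at hthread
  · intro j hj hjlen
    have hj1 : j % 2 = 1 := Nat.odd_iff.mp hj
    rw [← pointer_append (by omega) hjlen]
    exact hodd j hj (by simp; omega)

/-! Completeness: every element of `𝒫G` is a prefix of some `D11 n`. -/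

lemma mem_PG_prefix {p : List (ℕ × ℕ)} (h : p ∈ PG G11) : ∃ n, p <+: D11 n := by
  induction p using List.reverseRecOn with
  | nil => exact ⟨0, List.nil_prefix⟩
  | append_singleton q x ih =>
    obtain ⟨n, hq⟩ := ih (PG_drop h)
    obtain ⟨⟨hdia, hresp⟩, hodd⟩ := h
    obtain ⟨α, m⟩ := x
    set L := q.length with hLdef
    have hqlen := len_le_of_prefix hq
    have hplen : (q ++ [(α, m)]).length = L + 1 := by simp [hLdef]
    have hpL : (q ++ [(α, m)])[L]? = some (α, m) := List.getElem?_concat_length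
    have hptrL : pointer (q ++ [(α, m)]) (L+1) = some α := by
      unfold pointer
      simp only [Nat.add_sub_cancel, hpL, Option.map_some]
    -- entries of q transfer
    have hentry : ∀ i, i < L → (q ++ [(α, m)])[i]? = some (ent n i) := by
      intro i hi
      rw [List.getElem?_append_left (by omega)]
      exact entry_of_prefix hq hi
    have hpt1 : 1 ≤ L → pointer (q ++ [(α, m)]) 1 = some 0 := by
      intro hL1
      unfold pointer
      rw [(show (1:ℕ) - 1 = 0 from rfl), hentry 0 (by omega), Option.map_some]
      rfl
    rcases Nat.even_or_odd L with hLe | hLo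
    · -- next position L+1 is odd
      have hLmod : L % 2 = 0 := Nat.even_iff.mp hLe
      have hα : α = L := by
        have := hodd (L+1) (by rw [Nat.odd_iff]; omega) (by simp [hLdef])
        rw [hptrL] at this
        have := Option.some.inj this
        omega
      subst hα
      rcases Nat.eq_zero_or_pos L with hL0 | hLpos
      · -- first move
        have hq0 : q = [] := List.length_eq_zero_iff.mp (by omega)
        have hpt : pointer (q ++ [(L, m)]) 1 = some 0 := by
          rw [(show (1:ℕ) = L + 1 by omega), hptrL, hL0]
        have hpL0 : (q ++ [(L, m)])[0]? = some (L, m) := by simp [hq0]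
        have hchain : IsChain (q ++ [(L, m)]) [1] := by
          refine ⟨?_, ?_, ?_, ?_⟩
          · intro j hj; simp at hj; subst hj; simp
          · intro j hj
            simp at hj; subst hj
            exact hpt
          · simp [List.Chain']
          · simp [List.Chain']
        have hthr := hresp [1] hchain
        have ht : threadOf (q ++ [(L, m)]) [1] = [m] := by
          simp [threadOf, hpL0, hq0]
        rw [ht] at hthr
        have hm1 := G_single hthr
        refine ⟨0, ⟨[(1,1)], ?_⟩⟩
        rw [hq0, hm1, hL0]
        decide
      · -- L ≥ 2 even: chain [1, L, L+1]
        have hL2 : 2 ≤ L := by omega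
        have hptrLq : pointer (q ++ [(L, m)]) L = some 1 := by
          unfold pointer
          rw [hentry (L-1) (by omega), Option.map_some, ent_fst]
          have h1 : ¬ (L - 1 = 0) := by omega
          have h2 : (L-1) % 2 = 1 := by omega
          simp [h1, h2]
        have hchain : IsChain (q ++ [(L, m)]) [1, L, L+1] := by
          refine ⟨?_, ?_, ?_, ?_⟩
          · intro j hj
            simp at hj
            rcases hj with rfl | rfl | rfl <;> simp <;> omega
          · intro j hj
            simp at hj; subst hj
            exact hpt1 (by omega)
          · rw [List.Chain', List.isChain_cons_cons, List.isChain_cons_cons]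
            exact ⟨hptrLq, hptrL, by simp⟩
          · rw [List.Chain', List.isChain_cons_cons, List.isChain_cons_cons]
            refine ⟨by omega, by omega, by simp⟩
        have hthr := hresp _ hchain
        have hsnd : threadOf (q ++ [(L, m)]) [1, L, L+1] = [1, (ent n (L-1)).2, m] := by
          simp only [threadOf, List.filterMap_cons, List.filterMap_nil]
          rw [(show (1:ℕ) - 1 = 0 from rfl), hentry 0 (by omega),
            (show L + 1 - 1 = L from by omega), hpL, hentry (L-1) (by omega)]
          rfl
        rw [hsnd] at hthr
        by_cases hlast : L - 1 = 2*n+1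
        · exfalso
          have : (ent n (L-1)).2 = 1 := by rw [ent_snd, if_neg]; tauto
          rw [this] at hthr
          exact G_11m hthr
        · have hsb : (ent n (L-1)).2 = 2 := by
            rw [ent_snd, if_pos ⟨by omega, hlast⟩]
          rw [hsb] at hthr
          have hm1 := G_12m hthr
          subst hm1
          refine ⟨n, ?_⟩
          rw [(show ((L:ℕ), (1:ℕ)) = ent n L from (ent_even' (by omega) (by omega)).symm)]
          exact prefix_snoc hq (by omega)
    · -- L odd: position L+1 is even
      have hLmod : L % 2 = 1 := Nat.odd_iff.mp hLo
      have hd := hdia (L+1) (by omega) (by simp [hLdef]) α hptrL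
      have hαodd : α % 2 = 1 := by
        obtain ⟨hlt, hoddd⟩ := hd
        rw [Nat.odd_iff] at hoddd
        omega
      have hαlt : α < L + 1 := hd.1
      -- rule out α ≥ 3
      have hα1 : α = 1 := by
        by_contra hα3'
        have hα3 : 3 ≤ α := by omega
        have hp_am1 : pointer (q ++ [(α, m)]) (α - 1) = some 1 := by
          unfold pointer
          rw [hentry (α - 1 - 1) (by omega), Option.map_some, ent_fst]
          have h1 : ¬ (α - 1 - 1 = 0) := by omega
          have h2 : (α - 1 - 1) % 2 = 1 := by omega
          simp [h1, h2]
        have hp_a : pointer (q ++ [(α, m)]) α = some (α - 1) := by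
          unfold pointer
          rw [hentry (α - 1) (by omega), Option.map_some, ent_fst]
          have h1 : ¬ (α - 1 = 0) := by omega
          have h2 : ¬ ((α - 1) % 2 = 1) := by omega
          simp [h1, h2]
        have hchain : IsChain (q ++ [(α, m)]) [1, α - 1, α, L+1] := by
          refine ⟨?_, ?_, ?_, ?_⟩
          · intro j hj
            simp at hj
            rcases hj with rfl | rfl | rfl | rfl <;> simp <;> omega
          · intro j hj
            simp at hj; subst hj
            exact hpt1 (by omega)
          · rw [List.Chain', List.isChain_cons_cons, List.isChain_cons_cons, List.isChain_cons_cons]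
            exact ⟨hp_am1, hp_a, hptrL, by simp⟩
          · rw [List.Chain', List.isChain_cons_cons, List.isChain_cons_cons, List.isChain_cons_cons]
            refine ⟨by omega, by omega, by omega, by simp⟩
        have hthr := hresp _ hchain
        have hsnd : threadOf (q ++ [(α, m)]) [1, α-1, α, L+1] =
            [1, (ent n (α-1-1)).2, (ent n (α-1)).2, m] := by
          simp only [threadOf, List.filterMap_cons, List.filterMap_nil]
          rw [(show (1:ℕ) - 1 = 0 from rfl), hentry 0 (by omega),
            (show L + 1 - 1 = L from by omega), hpL,
            hentry (α-1-1) (by omega), hentry (α-1) (by omega)]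
          rfl
        have hs1 : (ent n (α-1-1)).2 = 2 := by
          rw [ent_snd, if_pos]
          refine ⟨by omega, by omega⟩
        have hs2 : (ent n (α-1)).2 = 1 := by
          rw [ent_snd, if_neg]
          intro hcon
          omega
        rw [hsnd, hs1, hs2] at hthr
        exact G_121m hthr
      subst hα1
      -- chain [1, L+1]: thread [1, m]
      have hchain : IsChain (q ++ [(1, m)]) [1, L+1] := by
        refine ⟨?_, ?_, ?_, ?_⟩
        · intro j hj
          simp at hj
          rcases hj with rfl | rfl <;> simp <;> omega
        · intro j hj
          simp at hj; subst hj
          exact hpt1 (by omega)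
        · rw [List.Chain', List.isChain_cons_cons]
          exact ⟨hptrL, by simp⟩
        · rw [List.Chain', List.isChain_cons_cons]
          exact ⟨by omega, by simp⟩
      have hthr := hresp _ hchain
      have hsnd : threadOf (q ++ [(1, m)]) [1, L+1] = [1, m] := by
        simp only [threadOf, List.filterMap_cons, List.filterMap_nil]
        rw [(show (1:ℕ) - 1 = 0 from rfl), hentry 0 (by omega),
          (show L + 1 - 1 = L from by omega), hpL]
        rfl
      rw [hsnd] at hthr
      rcases G_two hthr with hm | hm
      · -- m = 1: prefix of D11 ((L-1)/2)
        subst hm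
        set k := (L-1)/2 with hk
        have hLk : L = 2*k+1 := by omega
        have hq' : q <+: D11 k := prefix_congr (n' := k) hq (by omega) (by omega)
        have hekL : ent k L = (1, 1) := by rw [hLk]; exact ent_last k
        rw [(show ((1:ℕ), (1:ℕ)) = ent k L from hekL.symm)]
        exact ⟨k, prefix_snoc hq' (by omega)⟩
      · -- m = 2: prefix of D11 (n+1)
        subst hm
        have hq' : q <+: D11 (n+1) := prefix_congr (n' := n+1) hq (by omega) (by omega)
        have heL : ent (n+1) L = (1, 2) := ent_odd hLmod (by omega)
        rw [(show ((1:ℕ), (2:ℕ)) = ent (n+1) L from heL.symm)]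
        exact ⟨n+1, prefix_snoc hq' (by omega)⟩

/-! `τ_n` is a finite live strategy. -/

lemma tau_strategy (n : ℕ) : IsStrategy (PG G11) (tau11 n) := by
  refine ⟨fun p hp => mem_PG_of_prefix hp, ⟨List.nil_prefix, ?_⟩, ?_⟩
  · intro p hp _
    exact (List.dropLast_prefix p).trans hp
  · intro p hp hodd
    have hlen := len_le_of_prefix hp
    have hmod : p.length % 2 = 1 := Nat.odd_iff.mp hodd
    refine ⟨ent n p.length, prefix_snoc hp (by omega), ?_⟩
    intro m' hm'
    have h1 : (p ++ [m'])[p.length]? = some m' := List.getElem?_concat_length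
    have h2 : (p ++ [m'])[p.length]? = some (ent n p.length) :=
      entry_of_prefix hm' (by simp)
    exact Option.some.inj (h1.symm.trans h2)

lemma tau_live (n : ℕ) : Live (PG G11) (tau11 n) := by
  intro p hp heven m hm
  obtain ⟨n', hp'⟩ := mem_PG_prefix hm
  have hlen := len_le_of_prefix hp
  have hlen' := len_le_of_prefix hp'
  have hmod : p.length % 2 = 0 := Nat.even_iff.mp heven
  simp only [List.length_append, List.length_singleton] at hlen'
  rcases Nat.lt_or_ge p.length (2*n+2) with hL | hL
  · -- m = ent n' p.length = ent n p.length
    have h1 : (p ++ [m])[p.length]? = some m := List.getElem?_concat_length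
    have h2 : (p ++ [m])[p.length]? = some (ent n' p.length) :=
      entry_of_prefix hp' (by simp)
    have hm' : m = ent n p.length := by
      have := Option.some.inj (h1.symm.trans h2)
      rw [this]
      exact ent_even hmod
    rw [hm']
    exact prefix_snoc hp hL
  · exfalso
    have hpfull : p = D11 n := hp.eq_of_length (by rw [D11_len]; omega)
    have hodd1 : (p ++ [m])[2*n+1]? = some (ent n (2*n+1)) := by
      rw [List.getElem?_append_left (by omega)]
      rw [hpfull, getD11, if_pos (by omega)]
    have hodd2 : (p ++ [m])[2*n+1]? = some (ent n' (2*n+1)) :=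
      entry_of_prefix hp' (by simp; omega)
    have hne : ent n (2*n+1) = ent n' (2*n+1) := Option.some.inj (hodd1.symm.trans hodd2)
    rw [ent_last, ent_odd (by omega) (by omega)] at hne
    exact absurd (congrArg Prod.snd hne) (by decide)

lemma tau_finite (n : ℕ) : (tau11 n).Finite := by
  apply Set.Finite.subset ((Set.finite_Iic (2*n+2)).image fun k => (D11 n).take k)
  intro p hp
  refine ⟨p.length, ?_, (List.prefix_iff_eq_take.mp hp).symm⟩
  simpa using len_le_of_prefix hp

/-! Conversely, every finite live strategy is some `τ_n`. -/

lemma game_mem_of_prefix {σ : Set (List (ℕ × ℕ))} (hg : IsGame σ) :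
    ∀ l ∈ σ, ∀ p, p <+: l → p ∈ σ := by
  intro l
  induction l using List.reverseRecOn with
  | nil =>
    intro hl p hp
    rw [List.prefix_nil.mp hp]; exact hl
  | append_singleton q x ih =>
    intro hl p hp
    rcases List.prefix_concat_iff.mp hp with rfl | hp'
    · exact hl
    · have hq : q ∈ σ := by
        have := hg.2 (q ++ [x]) hl (by simp)
        rwa [List.dropLast_concat] at this
      exact ih hq p hp'

lemma sigma_eq_tau {σ : Set (List (ℕ × ℕ))} (hstrat : IsStrategy (PG G11) σ)
    {k : ℕ} (hD : D11 k ∈ σ) : σ = tau11 k := by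
  obtain ⟨hsub, hgame, huniq⟩ := hstrat
  apply Set.eq_of_subset_of_subset
  · intro p hp
    induction p using List.reverseRecOn with
    | nil => exact List.nil_prefix
    | append_singleton q x ih =>
      have hq : q ∈ σ := by
        have := hgame.2 (q ++ [x]) hp (by simp)
        rwa [List.dropLast_concat] at this
      have hqpre : q <+: D11 k := ih hq
      have hqlen := len_le_of_prefix hqpre
      obtain ⟨n', hp'⟩ := mem_PG_prefix (hsub hp)
      have hlen' := len_le_of_prefix hp'
      simp only [List.length_append, List.length_singleton] at hlen'
      have hx1 : (q ++ [x])[q.length]? = some x := List.getElem?_concat_length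
      have hx2 : (q ++ [x])[q.length]? = some (ent n' q.length) :=
        entry_of_prefix hp' (by simp)
      have hx : x = ent n' q.length := Option.some.inj (hx1.symm.trans hx2)
      rcases Nat.lt_or_ge q.length (2*k+2) with hL | hL
      · rcases Nat.even_or_odd q.length with hqe | hqo
        · -- x = ent n' L = ent k L (even index)
          rw [hx, ent_even (Nat.even_iff.mp hqe)]
          exact prefix_snoc hqpre hL
        · -- odd length: uniqueness of response
          have hy : q ++ [ent k q.length] ∈ σ := by
            apply game_mem_of_prefix hgame (D11 k) hD
            exact prefix_snoc hqpre hL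
          obtain ⟨m0, hm0, hm0u⟩ := huniq q hq hqo
          have e1 : x = m0 := hm0u x hp
          have e2 : ent k q.length = m0 := hm0u _ hy
          rw [e1, ← e2]
          exact prefix_snoc hqpre hL
      · exfalso
        have hqfull : q = D11 k := hqpre.eq_of_length (by rw [D11_len]; omega)
        have ho1 : (q ++ [x])[2*k+1]? = some (ent k (2*k+1)) := by
          rw [List.getElem?_append_left (by omega)]
          rw [hqfull, getD11, if_pos (by omega)]
        have ho2 : (q ++ [x])[2*k+1]? = some (ent n' (2*k+1)) :=
          entry_of_prefix hp' (by simp; omega)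
        have hne : ent k (2*k+1) = ent n' (2*k+1) := Option.some.inj (ho1.symm.trans ho2)
        rw [ent_last, ent_odd (by omega) (by omega)] at hne
        exact absurd (congrArg Prod.snd hne) (by decide)
  · intro p hp
    exact game_mem_of_prefix hgame (D11 k) hD p hp

lemma converse_direction {σ : Set (List (ℕ × ℕ))} (hstrat : IsStrategy (PG G11) σ)
    (hlive : Live (PG G11) σ) (hfin : σ.Finite) : ∃ n, σ = tau11 n := by
  -- find k with D11 k ∈ σ
  by_cases hex : ∃ k, D11 k ∈ σ
  · obtain ⟨k, hk⟩ := hex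
    exact ⟨k, sigma_eq_tau hstrat hk⟩
  · exfalso
    push_neg at hex
    have hstep : ∀ k, A k ∈ σ → A (k+1) ∈ σ := by
      intro k hAk
      obtain ⟨m, hm, -⟩ := hstrat.2.2 (A k) hAk (by rw [A_len]; exact ⟨k, by ring⟩)
      obtain ⟨n', hp'⟩ := mem_PG_prefix (hstrat.1 hm)
      have hlen' := len_le_of_prefix hp'
      simp only [List.length_append, List.length_singleton, A_len] at hlen'
      have hx1 : (A k ++ [m])[(A k).length]? = some m := List.getElem?_concat_length
      have hx2 : (A k ++ [m])[(A k).length]? = some (ent n' ((A k).length)) :=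
        entry_of_prefix hp' (by simp)
      rw [A_len] at hx1 hx2
      have hx : m = ent n' (2*k+1) := Option.some.inj (hx1.symm.trans hx2)
      by_cases hkn : k = n'
      · exfalso
        apply hex k
        have h11 : ent n' (2*k+1) = (1,1) := by rw [hkn]; exact ent_last n'
        rw [hx, h11] at hm
        rwa [D11_eq_A]
      · have hkn' : k < n' := by omega
        have hm2 : ent n' (2*k+1) = (1,2) := ent_odd (by omega) (by omega)
        rw [hx, hm2] at hm
        have hnext : (A k ++ [(1,2)]) ++ [(2*k+2, 1)] ∈ σ := by
          apply hlive _ hm (by simp [A_len]; exact ⟨k+1, by ring⟩)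
          rw [← A_succ]
          exact mem_PG_of_prefix (A_prefix (k+1))
        rwa [← A_succ] at hnext
    have hall : ∀ k, A k ∈ σ := by
      intro k
      induction k with
      | zero =>
        have h0 : ([] : List (ℕ × ℕ)) ∈ σ := hstrat.2.1.1
        have := hlive [] h0 (by simp) (0,1) (by
          have : [((0:ℕ),(1:ℕ))] <+: D11 0 := ⟨[(1,1)], by decide⟩
          simpa using mem_PG_of_prefix this)
        rw [A_zero]
        simpa using this
      | succ k ih => exact hstep k ih
    have hinj : Function.Injective A := by
      intro a b hab
      have := congrArg List.length hab
      rw [A_len, A_len] at this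
      omega
    exact (Set.infinite_of_injective_forall_mem hinj hall) hfin

lemma tau_injective : Function.Injective tau11 := by
  intro a b hab
  have h1 : D11 a ∈ tau11 b := hab ▸ (List.prefix_refl _)
  have h2 : D11 b ∈ tau11 a := hab ▸ (List.prefix_refl _)
  have l1 := len_le_of_prefix h1
  have l2 := len_le_of_prefix h2
  rw [D11_len] at l1 l2
  omega

/-- For `U = X→(X→X)→X`, the finite live strategies on the
`P`-backtracking game `𝒫G(Δ_U)` are exactly the strategies `τ_n` for `n ∈ ℕ`;
in particular they are in bijection with `ℕ`. -/
theorem finiteLiveStrategies_U11 :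
    (∀ σ : Set (List (ℕ × ℕ)),
        (IsStrategy (PG (gameOf (tyTrans U11) none)) σ ∧
         Live (PG (gameOf (tyTrans U11) none)) σ ∧ σ.Finite) ↔
        ∃ n : ℕ, σ = tau11 n) ∧
    Function.Injective tau11 := by
  constructor
  · intro σ
    constructor
    · rintro ⟨hstrat, hlive, hfin⟩
      exact converse_direction hstrat hlive hfin
    · rintro ⟨n, rfl⟩
      exact ⟨tau_strategy n, tau_live n, tau_finite n⟩
  · exact tau_injective


end Hypergames
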